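/- arXiv:0707.1417 — 2 statements merged into one kernel-verified Lean document; each statement's English description precedes it below -/
import Mathlib

section
/- Let d ≥ 1, let C = (C_1,…,C_d) be a coisometric row contraction on H_C and A = (A_1,…,A_d) a row contraction on H_A. There exist operators B_i : H_C → H_A (i = 1,…,d) such that the block operators E_i = [[C_i, 0],[B_i, A_i]] define a coisometric row contraction E on H_C ⊕ H_A (a coisometric lifting of C by A) if and only if there exists a linear isometry from the defect space cl(ran D_{*,A}) ⊆ H_A into the kernel of the row operator of C inside ⊕^d H_C. -/
set_option synthInstance.maxHeartbeats 1000000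
set_option maxHeartbeats 1000000
noncomputable section

open ContinuousLinearMap

variable {d : ℕ}
variable {H : Type*} [NormedAddCommGroup H] [InnerProductSpace ℂ H] [CompleteSpace H]

/-- The map Φ_T(X) = ∑ T_i X T_i^*. -/
def cpMap (T : Fin d → H →L[ℂ] H) (X : H →L[ℂ] H) : H →L[ℂ] H :=
  ∑ i, T i ∘L X ∘L adjoint (T i)

/-- Row contraction: ∑ T_i T_i^* ≤ 1. -/
def IsRowContraction (T : Fin d → H →L[ℂ] H) : Prop :=
  ∑ i, T i ∘L adjoint (T i) ≤ 1

/-- The defect operator of T^*: D_{*,T} = (1 - ∑ T_i T_i^*)^(1/2). -/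
def defectStar (T : Fin d → H →L[ℂ] H) : H →L[ℂ] H :=
  CFC.sqrt (1 - ∑ i, T i ∘L adjoint (T i))

/-- product T_α = T_{α₁} ⋯ T_{αₙ} over a word α. -/
def opWord (T : Fin d → H →L[ℂ] H) (α : List (Fin d)) : H →L[ℂ] H :=
  (α.map T).prod

/-- *-stable row contraction. -/
def IsStarStable (T : Fin d → H →L[ℂ] H) : Prop :=
  ∀ h : H, Filter.Tendsto
    (fun n : ℕ => ∑ α : Fin n → Fin d, ‖adjoint (opWord T (List.ofFn α)) h‖ ^ 2)
    Filter.atTop (nhds 0)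

instance piLpCompleteSpace {ι : Type*} (G : ι → Type*) [∀ i, NormedAddCommGroup (G i)]
    [∀ i, CompleteSpace (G i)] : CompleteSpace (PiLp 2 G) :=
  PiLp.completeSpace 2 G

section Row

variable (d)

/-- The row operator of a tuple. -/
def rowOp (T : Fin d → H →L[ℂ] H) : PiLp 2 (fun _ : Fin d => H) →L[ℂ] H :=
  ∑ i, (T i) ∘L (ContinuousLinearMap.proj i) ∘L
    (PiLp.continuousLinearEquiv 2 ℂ (fun _ : Fin d => H)).toContinuousLinearMap

/-- The column operator with components (B i)^*. -/
def colAdj {G : Type*} [NormedAddCommGroup G] [InnerProductSpace ℂ G] [CompleteSpace G]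
    (B : Fin d → H →L[ℂ] G) : G →L[ℂ] PiLp 2 (fun _ : Fin d => H) :=
  ((PiLp.continuousLinearEquiv 2 ℂ (fun _ : Fin d => H)).symm.toContinuousLinearMap) ∘L
    (ContinuousLinearMap.pi (fun i => adjoint (B i)))

/-- The defect operator D_T = (1 - T^* T)^(1/2) of the row operator. -/
def defectRow (T : Fin d → H →L[ℂ] H) :
    PiLp 2 (fun _ : Fin d => H) →L[ℂ] PiLp 2 (fun _ : Fin d => H) :=
  CFC.sqrt (1 - adjoint (rowOp d T) ∘L rowOp d T)

end Row

section Block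

variable (HC HA : Type*) [NormedAddCommGroup HC] [InnerProductSpace ℂ HC] [CompleteSpace HC]
  [NormedAddCommGroup HA] [InnerProductSpace ℂ HA] [CompleteSpace HA]

/-- The Hilbert space direct sum H_C ⊕ H_A. -/
abbrev HilbSum := WithLp 2 (HC × HA)

variable {HC HA}

/-- The block operator [[X₁₁, X₁₂],[X₂₁, X₂₂]] on H_C ⊕ H_A. -/
def blockOp (X11 : HC →L[ℂ] HC) (X12 : HA →L[ℂ] HC)
    (X21 : HC →L[ℂ] HA) (X22 : HA →L[ℂ] HA) :
    HilbSum HC HA →L[ℂ] HilbSum HC HA :=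
  ((WithLp.prodContinuousLinearEquiv 2 ℂ HC HA).symm.toContinuousLinearMap) ∘L
    ((X11 ∘L fst ℂ HC HA + X12 ∘L snd ℂ HC HA).prod
      (X21 ∘L fst ℂ HC HA + X22 ∘L snd ℂ HC HA)) ∘L
    ((WithLp.prodContinuousLinearEquiv 2 ℂ HC HA).toContinuousLinearMap)

/-- Compression of an operator on H_C ⊕ H_A to H_C. -/
def comprC (X : HilbSum HC HA →L[ℂ] HilbSum HC HA) : HC →L[ℂ] HC :=
  (fst ℂ HC HA) ∘L ((WithLp.prodContinuousLinearEquiv 2 ℂ HC HA).toContinuousLinearMap) ∘L X ∘L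
    ((WithLp.prodContinuousLinearEquiv 2 ℂ HC HA).symm.toContinuousLinearMap) ∘L (inl ℂ HC HA)

end Block


/-- The i-th coordinate projection of the d-fold Hilbert space direct sum. -/
def projPiLp {H : Type*} [NormedAddCommGroup H] [InnerProductSpace ℂ H] [CompleteSpace H]
    {d : ℕ} (i : Fin d) : PiLp 2 (fun _ : Fin d => H) →L[ℂ] H :=
  (ContinuousLinearMap.proj i) ∘L
    (PiLp.continuousLinearEquiv 2 ℂ (fun _ : Fin d => H)).toContinuousLinearMap

variable {HC HA : Type*} [NormedAddCommGroup HC] [InnerProductSpace ℂ HC] [CompleteSpace HC]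
  [NormedAddCommGroup HA] [InnerProductSpace ℂ HA] [CompleteSpace HA]

set_option linter.unusedSectionVars false

private lemma withLp_ext {z w : WithLp 2 (HC × HA)} (h1 : z.fst = w.fst) (h2 : z.snd = w.snd) :
    z = w := WithLp.ofLp_injective 2 (Prod.ext h1 h2)

private lemma blockOp_apply_fst (X11 : HC →L[ℂ] HC) (X12 : HA →L[ℂ] HC)
    (X21 : HC →L[ℂ] HA) (X22 : HA →L[ℂ] HA) (z : WithLp 2 (HC × HA)) :
    (blockOp X11 X12 X21 X22 z).fst = X11 z.fst + X12 z.snd := rfl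

private lemma blockOp_apply_snd (X11 : HC →L[ℂ] HC) (X12 : HA →L[ℂ] HC)
    (X21 : HC →L[ℂ] HA) (X22 : HA →L[ℂ] HA) (z : WithLp 2 (HC × HA)) :
    (blockOp X11 X12 X21 X22 z).snd = X21 z.fst + X22 z.snd := rfl

private lemma blockOp_comp (a a' : HC →L[ℂ] HC) (b b' : HA →L[ℂ] HC)
    (c c' : HC →L[ℂ] HA) (e e' : HA →L[ℂ] HA) :
    blockOp a b c e ∘L blockOp a' b' c' e' =
      blockOp (a ∘L a' + b ∘L c') (a ∘L b' + b ∘L e')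
        (c ∘L a' + e ∘L c') (c ∘L b' + e ∘L e') := by
  refine ContinuousLinearMap.ext fun z => withLp_ext ?_ ?_ <;>
    simp [blockOp_apply_fst, blockOp_apply_snd, map_add] <;> abel

private lemma blockOp_add (a a' : HC →L[ℂ] HC) (b b' : HA →L[ℂ] HC)
    (c c' : HC →L[ℂ] HA) (e e' : HA →L[ℂ] HA) :
    blockOp a b c e + blockOp a' b' c' e' = blockOp (a + a') (b + b') (c + c') (e + e') := by
  refine ContinuousLinearMap.ext fun z => withLp_ext ?_ ?_ <;>
    simp [blockOp_apply_fst, blockOp_apply_snd] <;> abel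

private lemma blockOp_zero : blockOp (0 : HC →L[ℂ] HC) (0 : HA →L[ℂ] HC) (0 : HC →L[ℂ] HA)
    (0 : HA →L[ℂ] HA) = 0 := by
  refine ContinuousLinearMap.ext fun z => withLp_ext ?_ ?_ <;>
    simp [blockOp_apply_fst, blockOp_apply_snd]

private lemma blockOp_one : blockOp (1 : HC →L[ℂ] HC) (0 : HA →L[ℂ] HC) (0 : HC →L[ℂ] HA)
    (1 : HA →L[ℂ] HA) = 1 := by
  refine ContinuousLinearMap.ext fun z => withLp_ext ?_ ?_ <;>
    simp [blockOp_apply_fst, blockOp_apply_snd]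

private lemma blockOp_sum {ι : Type*} (s : Finset ι) (a : ι → HC →L[ℂ] HC) (b : ι → HA →L[ℂ] HC)
    (c : ι → HC →L[ℂ] HA) (e : ι → HA →L[ℂ] HA) :
    ∑ i ∈ s, blockOp (a i) (b i) (c i) (e i) =
      blockOp (∑ i ∈ s, a i) (∑ i ∈ s, b i) (∑ i ∈ s, c i) (∑ i ∈ s, e i) := by
  induction s using Finset.cons_induction with
  | empty => simp only [Finset.sum_empty]; exact blockOp_zero.symm
  | cons i s hi ih => simp [Finset.sum_cons, ih, blockOp_add]

private lemma blockOp_adjoint (a : HC →L[ℂ] HC) (b : HA →L[ℂ] HC)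
    (c : HC →L[ℂ] HA) (e : HA →L[ℂ] HA) :
    adjoint (blockOp a b c e) = blockOp (adjoint a) (adjoint c) (adjoint b) (adjoint e) := by
  symm
  rw [ContinuousLinearMap.eq_adjoint_iff]
  intro x y
  simp only [WithLp.prod_inner_apply, WithLp.ofLp_fst, WithLp.ofLp_snd, blockOp_apply_fst, blockOp_apply_snd,
    inner_add_left, inner_add_right, adjoint_inner_left]
  ring

private lemma blockOp_eq_one_iff (a : HC →L[ℂ] HC) (b : HA →L[ℂ] HC)
    (c : HC →L[ℂ] HA) (e : HA →L[ℂ] HA) :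
    blockOp a b c e = 1 ↔ a = 1 ∧ b = 0 ∧ c = 0 ∧ e = 1 := by
  constructor
  · intro h
    have hfst : ∀ z : WithLp 2 (HC × HA), a z.fst + b z.snd = z.fst := fun z => by
      have := congrArg (fun f : WithLp 2 (HC × HA) →L[ℂ] WithLp 2 (HC × HA) => (f z).fst) h
      simpa [blockOp_apply_fst] using this
    have hsnd : ∀ z : WithLp 2 (HC × HA), c z.fst + e z.snd = z.snd := fun z => by
      have := congrArg (fun f : WithLp 2 (HC × HA) →L[ℂ] WithLp 2 (HC × HA) => (f z).snd) h
      simpa [blockOp_apply_snd] using this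
    refine ⟨ContinuousLinearMap.ext fun x => ?_, ContinuousLinearMap.ext fun y => ?_,
      ContinuousLinearMap.ext fun x => ?_, ContinuousLinearMap.ext fun y => ?_⟩
    · simpa using hfst ((WithLp.equiv 2 (HC × HA)).symm (x, 0))
    · simpa using hfst ((WithLp.equiv 2 (HC × HA)).symm (0, y))
    · simpa using hsnd ((WithLp.equiv 2 (HC × HA)).symm (x, 0))
    · simpa using hsnd ((WithLp.equiv 2 (HC × HA)).symm (0, y))
  · rintro ⟨rfl, rfl, rfl, rfl⟩; exact blockOp_one

private lemma colAdj_apply {d : ℕ} (B : Fin d → HC →L[ℂ] HA) (x : HA) (i : Fin d) :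
    colAdj d B x i = adjoint (B i) x := rfl

private lemma rowOp_apply' {d : ℕ} (T : Fin d → HC →L[ℂ] HC)
    (x : PiLp 2 (fun _ : Fin d => HC)) :
    rowOp d T x = ∑ i, T i (x i) := by
  simp [rowOp, ContinuousLinearMap.sum_apply]

private lemma rowOp_comp_colAdj {d : ℕ} (T : Fin d → HC →L[ℂ] HC)
    (B : Fin d → HC →L[ℂ] HA) :
    rowOp d T ∘L colAdj d B = ∑ i, T i ∘L adjoint (B i) := by
  ext x
  simp [rowOp_apply', colAdj_apply, ContinuousLinearMap.sum_apply]

private lemma defect_sq {d : ℕ} {H : Type*} [NormedAddCommGroup H] [InnerProductSpace ℂ H]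
    [CompleteSpace H] (A : Fin d → H →L[ℂ] H) (hA : IsRowContraction A) :
    defectStar A ∘L defectStar A = 1 - ∑ i, A i ∘L adjoint (A i) := by
  rw [← ContinuousLinearMap.mul_def]
  exact CFC.sqrt_mul_sqrt_self _ (sub_nonneg.mpr hA)

private lemma defect_adjoint {d : ℕ} {H : Type*} [NormedAddCommGroup H] [InnerProductSpace ℂ H]
    [CompleteSpace H] (A : Fin d → H →L[ℂ] H) : adjoint (defectStar A) = defectStar A := by
  rw [← ContinuousLinearMap.star_eq_adjoint]
  exact ((CFC.sqrt_nonneg (a := 1 - ∑ i, A i ∘L adjoint (A i))).isSelfAdjoint).star_eq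

private lemma clm_ext_inner {E F : Type*} [NormedAddCommGroup E] [InnerProductSpace ℂ E]
    [NormedAddCommGroup F] [InnerProductSpace ℂ F] {A B : E →L[ℂ] F}
    (h : ∀ x y, (inner ℂ (A x) y : ℂ) = inner ℂ (B x) y) : A = B :=
  ContinuousLinearMap.ext fun x => ext_inner_right ℂ (h x)

/-- a coisometric lifting of `C` by `A` exists iff there is a linear isometry
from `cl(ran D_{*,A})` into `ker(row C)`. -/
theorem stmt4 {d : ℕ} (hd : 1 ≤ d)
    (C : Fin d → HC →L[ℂ] HC) (A : Fin d → HA →L[ℂ] HA)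
    (hC : ∑ i, C i ∘L adjoint (C i) = 1) (hA : IsRowContraction A) :
    (∃ B : Fin d → HC →L[ℂ] HA,
        ∑ i, blockOp (C i) 0 (B i) (A i) ∘L adjoint (blockOp (C i) 0 (B i) (A i)) = 1) ↔
      (∃ γ : ↥((LinearMap.range (defectStar A).toLinearMap).topologicalClosure) →ₗᵢ[ℂ]
          PiLp 2 (fun _ : Fin d => HC),
        ∀ v, γ v ∈ LinearMap.ker (rowOp d C).toLinearMap) := by
  classical
  set D := defectStar A with hDdef
  have hD2 : D ∘L D = 1 - ∑ i, A i ∘L adjoint (A i) := defect_sq A hA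
  have hDadj : adjoint D = D := defect_adjoint A
  set R : Submodule ℂ HA := LinearMap.range D.toLinearMap with hRdef
  set W := R.topologicalClosure with hWdef
  have hRW : R ≤ W := Submodule.le_topologicalClosure R
  have hDD_inner : ∀ x y : HA, (inner ℂ ((D ∘L D) x) y : ℂ) = inner ℂ (D x) (D y) := by
    intro x y
    calc (inner ℂ ((D ∘L D) x) y : ℂ) = inner ℂ (adjoint D (D x)) y := by
          rw [hDadj]; rfl
    _ = inner ℂ (D x) (D y) := ContinuousLinearMap.adjoint_inner_left _ _ _
  have key : ∀ B : Fin d → HC →L[ℂ] HA,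
      (∑ i, blockOp (C i) 0 (B i) (A i) ∘L adjoint (blockOp (C i) 0 (B i) (A i)) = 1) ↔
      (∑ i, C i ∘L adjoint (B i) = 0 ∧ ∑ i, B i ∘L adjoint (B i) = D ∘L D) := by
    intro B
    have hterm : ∀ i, blockOp (C i) 0 (B i) (A i) ∘L adjoint (blockOp (C i) 0 (B i) (A i)) =
        blockOp (C i ∘L adjoint (C i)) (C i ∘L adjoint (B i))
          (B i ∘L adjoint (C i)) (B i ∘L adjoint (B i) + A i ∘L adjoint (A i)) := by
      intro i
      rw [blockOp_adjoint, blockOp_comp]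
      congr 1 <;> simp
    rw [Finset.sum_congr rfl (fun i _ => hterm i), blockOp_sum, blockOp_eq_one_iff]
    constructor
    · rintro ⟨h1, h2, h3, h4⟩
      refine ⟨h2, ?_⟩
      rw [Finset.sum_add_distrib] at h4
      rw [hD2]
      exact eq_sub_of_add_eq h4
    · rintro ⟨h2, hbb⟩
      refine ⟨hC, h2, ?_, ?_⟩
      · have h3 := congrArg (ContinuousLinearMap.adjoint (𝕜 := ℂ)) h2
        rw [map_sum] at h3
        simpa [ContinuousLinearMap.adjoint_comp, ContinuousLinearMap.adjoint_adjoint] using h3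
      · rw [Finset.sum_add_distrib, hbb, hD2]
        abel
  constructor
  · rintro ⟨B, hB⟩
    obtain ⟨hCB, hBB⟩ := (key B).mp hB
    set T : HA →L[ℂ] PiLp 2 (fun _ : Fin d => HC) := colAdj d B with hTdef
    have hT_inner : ∀ x y : HA, (inner ℂ (T x) (T y) : ℂ) = inner ℂ (D x) (D y) := by
      intro x y
      have h1 : (inner ℂ (T x) (T y) : ℂ)
          = ∑ i, (inner ℂ (adjoint (B i) x) (adjoint (B i) y) : ℂ) := by
        simp [PiLp.inner_apply, hTdef, colAdj_apply]
      have h2 : (inner ℂ ((∑ i, B i ∘L adjoint (B i)) x) y : ℂ)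
          = ∑ i, (inner ℂ (adjoint (B i) x) (adjoint (B i) y) : ℂ) := by
        rw [ContinuousLinearMap.sum_apply, sum_inner]
        refine Finset.sum_congr rfl fun i _ => ?_
        rw [ContinuousLinearMap.comp_apply, ← ContinuousLinearMap.adjoint_inner_right]
      rw [h1, ← h2, hBB, hDD_inner]
    have hT_norm : ∀ x : HA, ‖T x‖ = ‖D x‖ := by
      intro x
      have h := hT_inner x x
      rw [inner_self_eq_norm_sq_to_K, inner_self_eq_norm_sq_to_K] at h
      have h2 : (‖T x‖ : ℝ) ^ 2 = ‖D x‖ ^ 2 := by exact_mod_cast h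
      exact (sq_eq_sq₀ (norm_nonneg _) (norm_nonneg _)).mp h2
    have hrowT : rowOp d C ∘L T = 0 := by
      rw [hTdef, rowOp_comp_colAdj, hCB]
    let Dl : HA →ₗ[ℂ] HA := D
    have hkerle : LinearMap.ker Dl ≤ LinearMap.ker (T : HA →ₗ[ℂ] PiLp 2 (fun _ : Fin d => HC)) := by
      intro x hx
      have hx' : D x = 0 := hx
      have hnx : ‖T x‖ = 0 := by rw [hT_norm, hx', norm_zero]
      exact norm_eq_zero.mp hnx
    have hRR : LinearMap.range Dl = R := rfl
    let q := (LinearMap.ker Dl).liftQ (T : HA →ₗ[ℂ] PiLp 2 (fun _ : Fin d => HC)) hkerle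
    let e1 := LinearMap.quotKerEquivRange Dl
    let f0 : R →ₗ[ℂ] PiLp 2 (fun _ : Fin d => HC) :=
      q ∘ₗ e1.symm.toLinearMap ∘ₗ (LinearEquiv.ofEq R (LinearMap.range Dl) hRR.symm).toLinearMap
    have hf0 : ∀ (x : HA) (hx : D x ∈ R), f0 ⟨D x, hx⟩ = T x := by
      intro x hx
      show q (e1.symm ((LinearEquiv.ofEq R (LinearMap.range Dl) hRR.symm) ⟨D x, hx⟩)) = T x
      have h1 : (LinearEquiv.ofEq R (LinearMap.range Dl) hRR.symm) ⟨D x, hx⟩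
          = ⟨Dl x, LinearMap.mem_range_self Dl x⟩ := by
        apply Subtype.ext; rfl
      have h2 : e1.symm ⟨Dl x, LinearMap.mem_range_self Dl x⟩
          = Submodule.Quotient.mk x := by
        apply e1.injective
        rw [LinearEquiv.apply_symm_apply]
        exact Subtype.ext (LinearMap.quotKerEquivRange_apply_mk Dl x).symm
      rw [h1, h2]
      exact Submodule.liftQ_apply _ _ _
    have hf0norm : ∀ x : R, ‖f0 x‖ = ‖x‖ := by
      rintro ⟨v, hv⟩
      obtain ⟨x, rfl⟩ := hv
      erw [hf0 x _, hT_norm]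
      rfl
    let f : R →L[ℂ] PiLp 2 (fun _ : Fin d => HC) :=
      f0.mkContinuous 1 (fun x => by rw [one_mul, hf0norm])
    have hf : ∀ x : R, f x = f0 x := fun x => rfl
    let e0 : R →ₗ[ℂ] W := Submodule.inclusion hRW
    let e : R →L[ℂ] W := e0.mkContinuous 1 (fun x => by rw [one_mul]; rfl)
    have henorm : ∀ x : R, ‖e x‖ = ‖x‖ := fun x => rfl
    have h_e : IsUniformInducing e :=
      (AddMonoidHomClass.isometry_of_norm e henorm).isUniformInducing
    have h_dense : DenseRange e := by
      intro w
      have himg : Subtype.val '' Set.range e = (R : Set HA) := by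
        ext v
        constructor
        · rintro ⟨_, ⟨x, rfl⟩, rfl⟩; exact x.2
        · intro hv; exact ⟨e ⟨v, hv⟩, ⟨⟨v, hv⟩, rfl⟩, rfl⟩
      have hw : (w : HA) ∈ closure (R : Set HA) := by
        have h2 := w.2
        rwa [← Submodule.topologicalClosure_coe]
      exact closure_subtype.mpr (by rw [himg]; exact hw)
    let g := f.extend e
    have hge : ∀ x : R, g (e x) = f x := fun x =>
      ContinuousLinearMap.extend_eq f h_dense h_e x
    have hgnorm : ∀ w : W, ‖g w‖ = ‖w‖ := by
      intro w
      refine h_dense.induction_on w (isClosed_eq g.continuous.norm continuous_norm) fun x => ?_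
      rw [hge, henorm, hf, hf0norm]
    have hfker : ∀ x : R, rowOp d C (f x) = 0 := by
      rintro ⟨v, hv⟩
      obtain ⟨x, rfl⟩ := hv
      erw [hf, hf0 x _, ← ContinuousLinearMap.comp_apply, hrowT]
      rfl
    have hgker : ∀ w : W, rowOp d C (g w) = 0 := by
      intro w
      refine h_dense.induction_on w
        (isClosed_eq ((rowOp d C).continuous.comp g.continuous) continuous_const) fun x => ?_
      rw [hge]
      exact hfker x
    exact ⟨⟨g.toLinearMap, hgnorm⟩, fun v => LinearMap.mem_ker.mpr (hgker v)⟩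
  · rintro ⟨γ, hγ⟩
    haveI : CompleteSpace W := (Submodule.isClosed_topologicalClosure R).completeSpace_coe
    let K : HA →L[ℂ] W := D.codRestrict W (fun x => hRW ⟨x, rfl⟩)
    let T : HA →L[ℂ] PiLp 2 (fun _ : Fin d => HC) := γ.toContinuousLinearMap ∘L K
    refine ⟨fun i => adjoint (projPiLp i ∘L T), (key _).mpr ⟨?_, ?_⟩⟩
    · simp only [ContinuousLinearMap.adjoint_adjoint]
      ext x
      simp only [ContinuousLinearMap.sum_apply, ContinuousLinearMap.comp_apply,
        ContinuousLinearMap.zero_apply]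
      have h := hγ (K x)
      rw [LinearMap.mem_ker, ContinuousLinearMap.coe_coe, rowOp_apply'] at h
      exact h
    · apply clm_ext_inner
      intro x y
      have hL : (inner ℂ ((∑ i, adjoint (projPiLp i ∘L T) ∘L
            adjoint (adjoint (projPiLp (d := d) (H := HC) i ∘L T))) x) y : ℂ)
          = ∑ i, (inner ℂ ((projPiLp i ∘L T) x) ((projPiLp i ∘L T) y) : ℂ) := by
        rw [ContinuousLinearMap.sum_apply, sum_inner]
        refine Finset.sum_congr rfl fun i _ => ?_
        rw [ContinuousLinearMap.comp_apply, ContinuousLinearMap.adjoint_adjoint,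
          ContinuousLinearMap.adjoint_inner_left]
      rw [hL, hDD_inner]
      have h1 : ∑ i, (inner ℂ ((projPiLp i ∘L T) x) ((projPiLp i ∘L T) y) : ℂ)
          = (inner ℂ (T x) (T y) : ℂ) := by
        rw [PiLp.inner_apply]
        rfl
      rw [h1]
      have h2 : (inner ℂ (T x) (T y) : ℂ) = inner ℂ (γ (K x)) (γ (K y)) := rfl
      rw [h2, γ.inner_map_map]
      rfl

end
end

section
/- Let d ≥ 1, let A = (A_1,…,A_d) be a row contraction on H_A and let γ : H_A → G be a bounded operator into a Hilbert space G. Call γ resolving if for every h ∈ H_A, (γ D_{*,A} A_α* h = 0 for all multi-indices α) implies (D_{*,A} A_α* h = 0 for all multi-indices α); call A completely non-coisometric (c.n.c.) if for every h ≠ 0 there exists n ∈ ℕ with ∑_{|α|=n} ‖A_α* h‖² < ‖h‖². Then the following are equivalent: (a) A is c.n.c. and γ is resolving; (b) { h ∈ H_A : γ D_{*,A} A_α* h = 0 for all multi-indices α } = {0}. -/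
set_option synthInstance.maxHeartbeats 1000000
set_option maxHeartbeats 1000000
noncomputable section

open ContinuousLinearMap

variable {d : ℕ}
variable {H : Type*} [NormedAddCommGroup H] [InnerProductSpace ℂ H] [CompleteSpace H]

variable {HA G : Type*} [NormedAddCommGroup HA] [InnerProductSpace ℂ HA] [CompleteSpace HA]
  [NormedAddCommGroup G] [InnerProductSpace ℂ G] [CompleteSpace G]

/-- `γ` is resolving for the row contraction `A`. -/
def Resolving {d : ℕ} (A : Fin d → HA →L[ℂ] HA) (γ : HA →L[ℂ] G) : Prop :=
  ∀ h : HA, (∀ α : List (Fin d), γ (defectStar A (adjoint (opWord A α) h)) = 0) →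
    (∀ α : List (Fin d), defectStar A (adjoint (opWord A α) h) = 0)

/-- `A` is completely non-coisometric. -/
def IsCNC {d : ℕ} (A : Fin d → HA →L[ℂ] HA) : Prop :=
  ∀ h : HA, h ≠ 0 →
    ∃ n : ℕ, ∑ α : Fin n → Fin d, ‖adjoint (opWord A (List.ofFn α)) h‖ ^ 2 < ‖h‖ ^ 2

section AuxProof

open scoped InnerProductSpace

variable {d : ℕ}

/-- Auxiliary: the sum `∑_{|α|=n} ‖A_α^* h‖²`. -/
def auxS (A : Fin d → HA →L[ℂ] HA) (n : ℕ) (h : HA) : ℝ :=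
  ∑ α : Fin n → Fin d, ‖adjoint (opWord A (List.ofFn α)) h‖ ^ 2

lemma defect_comp (A : Fin d → HA →L[ℂ] HA) (hA : IsRowContraction A) :
    defectStar A ∘L defectStar A = 1 - ∑ i, A i ∘L adjoint (A i) := by
  have h0 : (0 : HA →L[ℂ] HA) ≤ 1 - ∑ i, A i ∘L adjoint (A i) := sub_nonneg.mpr hA
  have := CFC.sqrt_mul_sqrt_self _ h0
  rw [ContinuousLinearMap.mul_def] at this
  simpa [defectStar] using this

lemma defect_selfAdjoint (A : Fin d → HA →L[ℂ] HA) :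
    ContinuousLinearMap.adjoint (defectStar A) = defectStar A :=
  (IsSelfAdjoint.of_nonneg (CFC.sqrt_nonneg _)).adjoint_eq

lemma adjoint_one' : ContinuousLinearMap.adjoint (1 : HA →L[ℂ] HA) = 1 := by
  rw [ContinuousLinearMap.one_def]
  exact ContinuousLinearMap.adjoint_id

lemma norm_defect_sq (A : Fin d → HA →L[ℂ] HA) (hA : IsRowContraction A) (k : HA) :
    ‖defectStar A k‖ ^ 2 = ‖k‖ ^ 2 - ∑ i, ‖adjoint (A i) k‖ ^ 2 := by
  have key : (⟪defectStar A k, defectStar A k⟫_ℂ)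
      = ⟪k, k⟫_ℂ - ∑ i, ⟪adjoint (A i) k, adjoint (A i) k⟫_ℂ := by
    have h1 : (⟪defectStar A k, defectStar A k⟫_ℂ)
        = ⟪(defectStar A ∘L defectStar A) k, k⟫_ℂ := by
      rw [ContinuousLinearMap.comp_apply]
      nth_rewrite 3 [← defect_selfAdjoint A]
      exact (ContinuousLinearMap.adjoint_inner_left _ _ _).symm
    rw [h1, defect_comp A hA]
    simp only [ContinuousLinearMap.sub_apply, ContinuousLinearMap.one_apply,
      ContinuousLinearMap.sum_apply, inner_sub_left, sum_inner,
      ContinuousLinearMap.comp_apply]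
    congr 1
    refine Finset.sum_congr rfl fun i _ => ?_
    exact (ContinuousLinearMap.adjoint_inner_right _ _ _).symm
  simp only [inner_self_eq_norm_sq_to_K] at key
  have key2 : ((‖defectStar A k‖ : ℂ)) ^ 2
      = ((‖k‖ : ℂ)) ^ 2 - ∑ i, ((‖adjoint (A i) k‖ : ℂ)) ^ 2 := key
  exact_mod_cast key2

lemma defect_zero_iff (A : Fin d → HA →L[ℂ] HA) (hA : IsRowContraction A) (k : HA) :
    defectStar A k = 0 ↔ ∑ i, ‖adjoint (A i) k‖ ^ 2 = ‖k‖ ^ 2 := by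
  have hns := norm_defect_sq A hA k
  constructor
  · intro h
    rw [h] at hns
    simp at hns
    linarith
  · intro h
    have h3 : ‖defectStar A k‖ ^ 2 = 0 := by rw [hns, h]; ring
    exact norm_eq_zero.mp (pow_eq_zero_iff two_ne_zero |>.mp h3)

lemma sum_adj_le (A : Fin d → HA →L[ℂ] HA) (hA : IsRowContraction A) (k : HA) :
    ∑ i, ‖adjoint (A i) k‖ ^ 2 ≤ ‖k‖ ^ 2 := by
  have hns := norm_defect_sq A hA k
  have : (0 : ℝ) ≤ ‖defectStar A k‖ ^ 2 := sq_nonneg _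
  linarith

lemma adj_word_cons (A : Fin d → HA →L[ℂ] HA) (i : Fin d) (α : List (Fin d)) (h : HA) :
    adjoint (opWord A (i :: α)) h = adjoint (opWord A α) (adjoint (A i) h) := by
  have : opWord A (i :: α) = A i ∘L opWord A α := by
    simp [opWord, ContinuousLinearMap.mul_def]
  rw [this, ContinuousLinearMap.adjoint_comp, ContinuousLinearMap.comp_apply]

lemma auxS_zero (A : Fin d → HA →L[ℂ] HA) (h : HA) : auxS A 0 h = ‖h‖ ^ 2 := by
  rw [auxS, Fintype.sum_unique]
  simp [opWord, adjoint_one']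

lemma auxS_succ (A : Fin d → HA →L[ℂ] HA) (n : ℕ) (h : HA) :
    auxS A (n + 1) h = ∑ i, auxS A n (adjoint (A i) h) := by
  rw [auxS]
  rw [← Fintype.sum_equiv (Fin.consEquiv (fun _ : Fin (n + 1) => Fin d))
    (fun p => ‖adjoint (opWord A (List.ofFn ((Fin.consEquiv _) p))) h‖ ^ 2)
    (fun α => ‖adjoint (opWord A (List.ofFn α)) h‖ ^ 2) (fun p => rfl)]
  rw [Fintype.sum_prod_type]
  refine Finset.sum_congr rfl fun i _ => ?_
  refine Finset.sum_congr rfl fun β _ => ?_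
  have hofn : List.ofFn (Fin.cons i β : Fin (n + 1) → Fin d) = i :: List.ofFn β := by
    rw [List.ofFn_succ]
    simp
  have hce : (Fin.consEquiv fun _ : Fin (n + 1) => Fin d) (i, β) = Fin.cons i β := rfl
  rw [hce, hofn, adj_word_cons]

lemma auxS_le (A : Fin d → HA →L[ℂ] HA) (hA : IsRowContraction A) :
    ∀ (n : ℕ) (h : HA), auxS A n h ≤ ‖h‖ ^ 2 := by
  intro n
  induction n with
  | zero => intro h; rw [auxS_zero]
  | succ n ih =>
    intro h
    rw [auxS_succ]
    calc ∑ i, auxS A n (adjoint (A i) h) ≤ ∑ i, ‖adjoint (A i) h‖ ^ 2 :=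
          Finset.sum_le_sum fun i _ => ih _
      _ ≤ ‖h‖ ^ 2 := sum_adj_le A hA h

lemma claim_fwd (A : Fin d → HA →L[ℂ] HA) (hA : IsRowContraction A) :
    ∀ (n : ℕ) (h : HA),
      (∀ α : List (Fin d), defectStar A (adjoint (opWord A α) h) = 0) →
      auxS A n h = ‖h‖ ^ 2 := by
  intro n
  induction n with
  | zero => intro h _; exact auxS_zero A h
  | succ n ih =>
    intro h hh
    rw [auxS_succ]
    have h1 : ∀ i, auxS A n (adjoint (A i) h) = ‖adjoint (A i) h‖ ^ 2 := by
      intro i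
      refine ih _ fun α => ?_
      have := hh (i :: α)
      rwa [adj_word_cons] at this
    rw [Finset.sum_congr rfl fun i _ => h1 i]
    have h2 : defectStar A h = 0 := by
      have := hh []
      simpa [opWord, adjoint_one'] using this
    exact (defect_zero_iff A hA h).mp h2

lemma claim_bwd (A : Fin d → HA →L[ℂ] HA) (hA : IsRowContraction A) :
    ∀ (α : List (Fin d)) (h : HA),
      (∀ m : ℕ, auxS A m h = ‖h‖ ^ 2) →
      defectStar A (adjoint (opWord A α) h) = 0 := by
  intro α
  induction α with
  | nil =>
    intro h hm
    have h1 : ∑ i, ‖adjoint (A i) h‖ ^ 2 = ‖h‖ ^ 2 := by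
      have := hm 1
      rw [auxS_succ] at this
      simpa [auxS_zero] using this
    have h2 : defectStar A h = 0 := (defect_zero_iff A hA h).mpr h1
    simpa [opWord, adjoint_one'] using h2
  | cons i β ih =>
    intro h hm
    rw [adj_word_cons]
    refine ih (adjoint (A i) h) fun m => ?_
    have h1 : ∑ j, ‖adjoint (A j) h‖ ^ 2 = ‖h‖ ^ 2 := by
      have := hm 1
      rw [auxS_succ] at this
      simpa [auxS_zero] using this
    have hsum : ∑ j, auxS A m (adjoint (A j) h) = ∑ j, ‖adjoint (A j) h‖ ^ 2 := by
      have := hm (m + 1)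
      rw [auxS_succ] at this
      rw [this, h1]
    have hle : ∀ j ∈ Finset.univ, auxS A m (adjoint (A j) h) ≤ ‖adjoint (A j) h‖ ^ 2 :=
      fun j _ => auxS_le A hA m _
    exact (Finset.sum_eq_sum_iff_of_le hle).mp hsum i (Finset.mem_univ i)

end AuxProof

/-- `A` is c.n.c. and `γ` resolving iff the only `h` with
`γ D_{*,A} A_α* h = 0` for all `α` is `h = 0`. -/
theorem stmt6 {d : ℕ} (hd : 1 ≤ d) (A : Fin d → HA →L[ℂ] HA)
    (hA : IsRowContraction A) (γ : HA →L[ℂ] G) :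
    (IsCNC A ∧ Resolving A γ) ↔
      ({h : HA | ∀ α : List (Fin d), γ (defectStar A (adjoint (opWord A α) h)) = 0}
        = {0}) := by
  constructor
  · rintro ⟨hcnc, hres⟩
    ext h
    simp only [Set.mem_setOf_eq, Set.mem_singleton_iff]
    constructor
    · intro hh
      by_contra hne
      have hD := hres h hh
      obtain ⟨n, hn⟩ := hcnc h hne
      have := claim_fwd A hA n h hD
      rw [auxS] at this
      linarith
    · rintro rfl
      intro α
      simp
  · intro hset
    have hmem : ∀ h : HA,
        (∀ α : List (Fin d), γ (defectStar A (adjoint (opWord A α) h)) = 0) → h = 0 := by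
      intro h hh
      have : h ∈ ({h : HA | ∀ α : List (Fin d),
          γ (defectStar A (adjoint (opWord A α) h)) = 0}) := hh
      rw [hset] at this
      exact this
    constructor
    · intro h hne
      by_contra hc
      push_neg at hc
      have hm : ∀ m : ℕ, auxS A m h = ‖h‖ ^ 2 :=
        fun m => le_antisymm (auxS_le A hA m h) (by have := hc m; rw [auxS]; exact this)
      have hzero : ∀ α : List (Fin d), defectStar A (adjoint (opWord A α) h) = 0 :=
        fun α => claim_bwd A hA α h hm
      exact hne (hmem h fun α => by rw [hzero α]; simp)
    · intro h hh α
      have h0 : h = 0 := hmem h hh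
      subst h0
      simp

end
end
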